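/- Let S be a finite symmetric generating set of a group G and let (g_i)_{i∈ℤ} be a convex geodesic line in Cay(G;S). If some edge of the line has label s ∈ Z(G) (i.e., g_i⁻¹ g_{i+1} = s for some i, with s central), then every edge of the line is labelled s: g_j⁻¹ g_{j+1} = s for all j ∈ ℤ. -/

import Mathlib

/-- The Cayley graph of a group `G` with respect to a symmetric set `S`
not containing the identity: `g` is adjacent to `h` iff `g⁻¹ * h ∈ S`. -/
def cayleyGraph {G : Type*} [Group G] (S : Set G)
    (hsymm : ∀ s ∈ S, s⁻¹ ∈ S) (hid : (1 : G) ∉ S) : SimpleGraph G where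
  Adj g h := g⁻¹ * h ∈ S
  symm := by
    constructor
    intro g h hgh
    have h2 := hsymm _ hgh
    simpa [mul_inv_rev] using h2
  loopless := by
    constructor
    intro g hg
    simp only [inv_mul_cancel] at hg
    exact hid hg

/-- **Lemma 2.4 (Löh).** If some edge of a convex geodesic line in `Cay(G;S)`
is labelled by a central element `s ∈ S`, then every edge of the line is
labelled `s`. -/
theorem central_label_propagates_on_convex_geodesic
    {G : Type*} [Group G]
    (S : Set G) (hfin : S.Finite)
    (hsymm : ∀ t ∈ S, t⁻¹ ∈ S) (hid : (1 : G) ∉ S)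
    (hgen : Subgroup.closure S = ⊤)
    (g : ℤ → G)
    -- `(g i)` is a geodesic line:
    (hgeo : ∀ i j : ℤ, (cayleyGraph S hsymm hid).dist (g i) (g j) = (i - j).natAbs)
    -- the geodesic line is convex: the canonical path is the unique one of its length
    (hconv : ∀ i j : ℤ, i < j →
      ∀ p : (cayleyGraph S hsymm hid).Walk (g i) (g j),
        p.length = (j - i).toNat →
        p.support = (List.range ((j - i).toNat + 1)).map (fun k => g (i + (k : ℤ))))
    (s : G) (hsS : s ∈ S) (hcentral : s ∈ Subgroup.center G)
    (i0 : ℤ) (hi0 : (g i0)⁻¹ * g (i0 + 1) = s) :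
    ∀ j : ℤ, (g j)⁻¹ * g (j + 1) = s := by
  set Γ := cayleyGraph S hsymm hid with hΓ
  have hadj : ∀ j : ℤ, Γ.Adj (g j) (g (j + 1)):= by
    intro j
    have h : Γ.dist (g (j + 1)) (g j) = 1 := by
      rw [hgeo]; simp
    exact (SimpleGraph.dist_eq_one_iff_adj.mp h).symm
  have hlabS : ∀ j : ℤ, (g j)⁻¹ * g (j + 1) ∈ S := fun j => hadj j
  have key : ∀ a b : ℤ, a = b → ((g a)⁻¹ * g (a + 1) = s) →
      ((g b)⁻¹ * g (b + 1) = s) := by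
    rintro a b rfl h; exact h
  -- forward step
  have step : ∀ j : ℤ, (g j)⁻¹ * g (j + 1) = s → (g (j + 1))⁻¹ * g (j + 1 + 1) = s := by
    intro j hj
    obtain ⟨t, ht⟩ : ∃ t, (g (j + 1))⁻¹ * g (j + 1 + 1) = t := ⟨_, rfl⟩
    have htS : t ∈ S := ht ▸ hlabS (j + 1)
    have h1 : g (j + 1) = g j * s := by rw [← hj]; group
    have h2 : g (j + 1 + 1) = g j * t * s := by
      have h0 : g (j + 1 + 1) = g (j + 1) * t := by rw [← ht]; group
      have hc : s * t = t * s := (Subgroup.mem_center_iff.mp hcentral t).symm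
      rw [h0, h1, mul_assoc, hc, mul_assoc]
    have a1 : Γ.Adj (g j) (g j * t) := by
      show (g j)⁻¹ * (g j * t) ∈ S
      have : (g j)⁻¹ * (g j * t) = t := by group
      rw [this]; exact htS
    have a2 : Γ.Adj (g j * t) (g (j + 2)) := by
      show (g j * t)⁻¹ * g (j + 2) ∈ S
      have e : (j + 2 : ℤ) = j + 1 + 1 := by ring
      rw [e, h2]
      have : (g j * t)⁻¹ * (g j * t * s) = s := by group
      rw [this]; exact hsS
    let p : Γ.Walk (g j) (g (j + 2)) :=
      SimpleGraph.Walk.cons a1 (SimpleGraph.Walk.cons a2 SimpleGraph.Walk.nil)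
    have hrange : (j + 2 - j).toNat = 2 := by omega
    have hplen : p.length = (j + 2 - j).toNat := by rw [hrange]; rfl
    have hsupp := hconv j (j + 2) (by omega) p hplen
    rw [hrange] at hsupp
    have hsupp' : ([g j, g j * t, g (j + 2)] : List G) =
        [g (j + ((0:ℕ):ℤ)), g (j + ((1:ℕ):ℤ)), g (j + ((2:ℕ):ℤ))] := hsupp
    simp only [List.cons.injEq] at hsupp'
    have h4 : g j * t = g (j + 1) :=
      hsupp'.2.1.trans (congrArg g (by push_cast; ring))
    rw [ht]
    exact mul_left_cancel (h4.trans h1)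
  -- backward step
  have stepb : ∀ j : ℤ, (g j)⁻¹ * g (j + 1) = s → (g (j - 1))⁻¹ * g (j - 1 + 1) = s := by
    intro j hj
    obtain ⟨t, ht⟩ : ∃ t, (g (j - 1))⁻¹ * g (j - 1 + 1) = t := ⟨_, rfl⟩
    have htS : t ∈ S := ht ▸ hlabS (j - 1)
    have h1 : g j = g (j - 1) * t := by
      have e : (j : ℤ) = j - 1 + 1 := by ring
      rw [e, ← ht]; group
    have h2 : g (j + 1) = g (j - 1) * s * t := by
      have h0 : g (j + 1) = g j * s := by rw [← hj]; group
      have hc : t * s = s * t := Subgroup.mem_center_iff.mp hcentral t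
      rw [h0, h1, mul_assoc, hc, mul_assoc]
    have a1 : Γ.Adj (g (j - 1)) (g (j - 1) * s) := by
      show (g (j - 1))⁻¹ * (g (j - 1) * s) ∈ S
      have : (g (j - 1))⁻¹ * (g (j - 1) * s) = s := by group
      rw [this]; exact hsS
    have a2 : Γ.Adj (g (j - 1) * s) (g (j + 1)) := by
      show (g (j - 1) * s)⁻¹ * g (j + 1) ∈ S
      rw [h2]
      have : (g (j - 1) * s)⁻¹ * (g (j - 1) * s * t) = t := by group
      rw [this]; exact htS
    let p : Γ.Walk (g (j - 1)) (g (j + 1)) :=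
      SimpleGraph.Walk.cons a1 (SimpleGraph.Walk.cons a2 SimpleGraph.Walk.nil)
    have hrange : (j + 1 - (j - 1)).toNat = 2 := by omega
    have hplen : p.length = (j + 1 - (j - 1)).toNat := by rw [hrange]; rfl
    have hsupp := hconv (j - 1) (j + 1) (by omega) p hplen
    rw [hrange] at hsupp
    have hsupp' : ([g (j - 1), g (j - 1) * s, g (j + 1)] : List G) =
        [g (j - 1 + ((0:ℕ):ℤ)), g (j - 1 + ((1:ℕ):ℤ)), g (j - 1 + ((2:ℕ):ℤ))] := hsupp
    simp only [List.cons.injEq] at hsupp'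
    have h4 : g (j - 1) * s = g j :=
      hsupp'.2.1.trans (congrArg g (by push_cast; ring))
    rw [ht]
    exact (mul_left_cancel (h4.trans h1)).symm
  -- induction over ℤ
  have main : ∀ k : ℤ, (g (i0 + k))⁻¹ * g (i0 + k + 1) = s := by
    intro k
    induction k using Int.induction_on with
    | zero => simpa using hi0
    | succ n ih => exact key _ _ (by push_cast; ring) (step _ ih)
    | pred n ih => exact key _ _ (by push_cast; ring) (stepb _ ih)
  intro j
  exact key _ _ (by ring) (main (j - i0))
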